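/- arXiv:1808.05869 — 2 statements merged into one kernel-verified Lean document; each statement's English description precedes it below -/
import Mathlib

section
/- Let N be a natural number, let 0 = τ₀ < τ₁ < ... < τ_{N+1} be switch times, and let (vᵢ, ωᵢ) ∈ ℝ² for i = 0, ..., N be velocity pairs. Let x = (x₁, x₂, ψ) : ℝ → ℝ³ be continuous with x(0) = x₀, differentiable on each open interval (τᵢ, τᵢ₊₁), and satisfying the unicycle equations x₁'(t) = vᵢ·cos(ψ(t)), x₂'(t) = vᵢ·sin(ψ(t)), ψ'(t) = ωᵢ for t ∈ (τᵢ, τᵢ₊₁). Let s > 0 and let x_s : ℝ → ℝ³ be continuous with x_s(0) = x₀, differentiable on each interval (τᵢ/s, τᵢ₊₁/s), and satisfying the unicycle equations with velocities (s·vᵢ, s·ωᵢ) on (τᵢ/s, τᵢ₊₁/s). Then x_s(t) = x(s·t) for all t ∈ [0, τ_{N+1}/s]. -/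
/-- Two continuous functions agreeing at the left endpoint of an interval and
having the same derivative on the open interval agree on the closed interval. -/
lemma eqOn_Icc_of_hasDerivAt_eq {a b : ℝ} {f g d : ℝ → ℝ}
    (hf : Continuous f) (hg : Continuous g)
    (hfd : ∀ t ∈ Set.Ioo a b, HasDerivAt f (d t) t)
    (hgd : ∀ t ∈ Set.Ioo a b, HasDerivAt g (d t) t)
    (hab : f a = g a) : ∀ t ∈ Set.Icc a b, f t = g t := by
  have hderiv : ∀ t ∈ Set.Ioo a b, HasDerivAt (f - g) 0 t := by
    intro t ht
    simpa using (hfd t ht).sub (hgd t ht)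
  have hint : interior (Set.Icc a b) = Set.Ioo a b := interior_Icc
  have hcont : ContinuousOn (f - g) (Set.Icc a b) := (hf.sub hg).continuousOn
  have hmono : MonotoneOn (f - g) (Set.Icc a b) := by
    apply monotoneOn_of_deriv_nonneg (convex_Icc a b) hcont
    · intro t ht
      rw [hint] at ht
      exact (hderiv t ht).differentiableAt.differentiableWithinAt
    · intro t ht
      rw [hint] at ht
      rw [(hderiv t ht).deriv]
  have hanti : AntitoneOn (f - g) (Set.Icc a b) := by
    apply antitoneOn_of_deriv_nonpos (convex_Icc a b) hcont
    · intro t ht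
      rw [hint] at ht
      exact (hderiv t ht).differentiableAt.differentiableWithinAt
    · intro t ht
      rw [hint] at ht
      rw [(hderiv t ht).deriv]
  intro t ht
  have hamem : a ∈ Set.Icc a b := Set.left_mem_Icc.2 (ht.1.trans ht.2)
  have h1 := hmono hamem ht ht.1
  have h2 := hanti hamem ht ht.1
  have h0 : (f - g) a = 0 := by simp [hab]
  have : (f - g) t = 0 := le_antisymm (h0 ▸ h2) (h0 ▸ h1)
  have := sub_eq_zero.mp (by simpa using this)
  exact this

/-- Theorem 5 of the paper, first conclusion: scaling all commanded velocities
of a piecewise-constant-velocity unicycle trajectory by `s > 0` and all switch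
times by `1/s` produces the time-reparametrization `x_s(t) = x(s·t)`. -/
theorem unicycle_scaled_trajectory_eq_reparametrization
    (N : ℕ) (τ : Fin (N + 2) → ℝ) (hτ0 : τ 0 = 0) (hτmono : StrictMono τ)
    (v ω : Fin (N + 1) → ℝ)
    (x₀ : ℝ × ℝ × ℝ)
    (x₁ x₂ ψ : ℝ → ℝ)
    (hx₁c : Continuous x₁) (hx₂c : Continuous x₂) (hψc : Continuous ψ)
    (hinit : (x₁ 0, x₂ 0, ψ 0) = x₀)
    (hode : ∀ i : Fin (N + 1), ∀ t ∈ Set.Ioo (τ i.castSucc) (τ i.succ),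
        HasDerivAt x₁ (v i * Real.cos (ψ t)) t ∧
        HasDerivAt x₂ (v i * Real.sin (ψ t)) t ∧
        HasDerivAt ψ (ω i) t)
    (s : ℝ) (hs : 0 < s)
    (xs₁ xs₂ ψs : ℝ → ℝ)
    (hxs₁c : Continuous xs₁) (hxs₂c : Continuous xs₂) (hψsc : Continuous ψs)
    (hsinit : (xs₁ 0, xs₂ 0, ψs 0) = x₀)
    (hsode : ∀ i : Fin (N + 1), ∀ t ∈ Set.Ioo (τ i.castSucc / s) (τ i.succ / s),
        HasDerivAt xs₁ (s * v i * Real.cos (ψs t)) t ∧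
        HasDerivAt xs₂ (s * v i * Real.sin (ψs t)) t ∧
        HasDerivAt ψs (s * ω i) t) :
    ∀ t ∈ Set.Icc (0 : ℝ) (τ (Fin.last (N + 1)) / s),
      (xs₁ t, xs₂ t, ψs t) = (x₁ (s * t), x₂ (s * t), ψ (s * t)) := by
  -- initial conditions componentwise
  have hinit' : xs₁ 0 = x₁ 0 ∧ xs₂ 0 = x₂ 0 ∧ ψs 0 = ψ 0 := by
    have := hsinit.trans hinit.symm
    exact ⟨congrArg Prod.fst this, congrArg (Prod.fst ∘ Prod.snd) this,
      congrArg (Prod.snd ∘ Prod.snd) this⟩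
  -- main induction: equality on [0, τ_j / s]
  have key : ∀ j : ℕ, ∀ hj : j < N + 2,
      ∀ t ∈ Set.Icc (0 : ℝ) (τ ⟨j, hj⟩ / s),
        xs₁ t = x₁ (s * t) ∧ xs₂ t = x₂ (s * t) ∧ ψs t = ψ (s * t) := by
    intro j
    induction j with
    | zero =>
      intro hj t ht
      have h0 : τ ⟨0, hj⟩ = 0 := hτ0
      rw [h0] at ht
      have : t = 0 := le_antisymm (by simpa [le_div_iff₀ hs] using ht.2) ht.1
      subst this
      simpa using hinit'
    | succ j ih =>
      intro hj t ht
      have hjlt : j < N + 2 := Nat.lt_of_succ_lt hj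
      set i : Fin (N + 1) := ⟨j, Nat.lt_of_succ_lt_succ hj⟩ with hi
      have hcs : i.castSucc = ⟨j, hjlt⟩ := rfl
      have hsc : i.succ = ⟨j + 1, hj⟩ := rfl
      set a : ℝ := τ i.castSucc / s with ha
      set b : ℝ := τ i.succ / s with hb
      have hτa : 0 ≤ τ i.castSucc := by
        rw [← hτ0]
        exact hτmono.monotone (Fin.zero_le _)
      have hτab : τ i.castSucc < τ i.succ := hτmono Fin.castSucc_lt_succ
      have ha0 : 0 ≤ a := div_nonneg hτa hs.le
      have hab : a ≤ b := by
        exact (div_le_div_iff_of_pos_right hs).mpr hτab.le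
      -- membership transfer
      have hmem : ∀ u ∈ Set.Ioo a b, s * u ∈ Set.Ioo (τ i.castSucc) (τ i.succ) := by
        intro u hu
        constructor
        · rw [mul_comm]; exact (div_lt_iff₀ hs).mp hu.1
        · rw [mul_comm]; exact (lt_div_iff₀ hs).mp hu.2
      -- IH at the point a
      have hIHa : xs₁ a = x₁ (s * a) ∧ xs₂ a = x₂ (s * a) ∧ ψs a = ψ (s * a) :=
        ih hjlt a ⟨ha0, le_refl a⟩
      have hsa : s * a = τ i.castSucc := by
        rw [ha, mul_div_cancel₀ _ hs.ne']
      -- continuity of composed functions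
      have hcomp : Continuous fun u : ℝ => s * u := continuous_const.mul continuous_id
      -- ψ equality on [a, b]
      have hψeq : ∀ u ∈ Set.Icc a b, ψs u = ψ (s * u) := by
        apply eqOn_Icc_of_hasDerivAt_eq hψsc (hψc.comp hcomp)
          (d := fun _ => s * ω i)
        · intro u hu
          exact (hsode i u hu).2.2
        · intro u hu
          have h1 : HasDerivAt ψ (ω i) (s * u) := (hode i (s * u) (hmem u hu)).2.2
          have h2 : HasDerivAt (fun y : ℝ => s * y) s u := by
            simpa using (hasDerivAt_id u).const_mul s
          have := h1.comp u h2
          simpa [mul_comm] using this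
        · exact hIHa.2.2
      -- x₁ equality on [a, b]
      have hx₁eq : ∀ u ∈ Set.Icc a b, xs₁ u = x₁ (s * u) := by
        apply eqOn_Icc_of_hasDerivAt_eq hxs₁c (hx₁c.comp hcomp)
          (d := fun u => s * v i * Real.cos (ψs u))
        · intro u hu
          exact (hsode i u hu).1
        · intro u hu
          have h1 : HasDerivAt x₁ (v i * Real.cos (ψ (s * u))) (s * u) :=
            (hode i (s * u) (hmem u hu)).1
          have h2 : HasDerivAt (fun y : ℝ => s * y) s u := by
            simpa using (hasDerivAt_id u).const_mul s
          have h3 := h1.comp u h2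
          have h4 : ψ (s * u) = ψs u := (hψeq u (Set.Ioo_subset_Icc_self hu)).symm
          rw [h4] at h3
          simpa [mul_comm, mul_assoc, mul_left_comm] using h3
        · exact hIHa.1
      -- x₂ equality on [a, b]
      have hx₂eq : ∀ u ∈ Set.Icc a b, xs₂ u = x₂ (s * u) := by
        apply eqOn_Icc_of_hasDerivAt_eq hxs₂c (hx₂c.comp hcomp)
          (d := fun u => s * v i * Real.sin (ψs u))
        · intro u hu
          exact (hsode i u hu).2.1
        · intro u hu
          have h1 : HasDerivAt x₂ (v i * Real.sin (ψ (s * u))) (s * u) :=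
            (hode i (s * u) (hmem u hu)).2.1
          have h2 : HasDerivAt (fun y : ℝ => s * y) s u := by
            simpa using (hasDerivAt_id u).const_mul s
          have h3 := h1.comp u h2
          have h4 : ψ (s * u) = ψs u := (hψeq u (Set.Ioo_subset_Icc_self hu)).symm
          rw [h4] at h3
          simpa [mul_comm, mul_assoc, mul_left_comm] using h3
        · exact hIHa.2.1
      -- split on whether t ≤ a
      rcases le_or_gt t a with hta | hta
      · exact ih hjlt t ⟨ht.1, hta⟩
      · have htb : t ≤ b := by
          have : τ ⟨j + 1, hj⟩ = τ i.succ := by rw [hsc]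
          calc t ≤ τ ⟨j + 1, hj⟩ / s := ht.2
            _ = b := by rw [hb, this]
        exact ⟨hx₁eq t ⟨hta.le, htb⟩, hx₂eq t ⟨hta.le, htb⟩, hψeq t ⟨hta.le, htb⟩⟩
  intro t ht
  have hlast : Fin.last (N + 1) = ⟨N + 1, Nat.lt_succ_self _⟩ := rfl
  rw [hlast] at ht
  obtain ⟨h1, h2, h3⟩ := key (N + 1) (Nat.lt_succ_self _) t ht
  rw [h1, h2, h3]
end

section
/- Under the hypotheses of the scaling theorem (piecewise-constant-velocity unicycle trajectory x with switch times 0 = τ₀ < ... < τ_{N+1}, and scaled trajectory x_s obtained with velocities (s·vᵢ, s·ωᵢ) on intervals (τᵢ/s, τᵢ₊₁/s) and x_s(0) = x(0)), suppose additionally: Δ > 0, t_c ∈ (0, τ_{N+1}] is such that the position (x₁(t), x₂(t)) lies in a set F ⊆ ℝ² for all t ∈ [0, t_c), and s = α·t_c/Δ for some α with 0 < α < 1. Then the position of the scaled trajectory (x_{s,1}(t), x_{s,2}(t)) lies in F for all t ∈ [0, Δ]. -/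
lemma const_of_deriv_zero_Ioo (h : ℝ → ℝ) (hc : Continuous h) (b c : ℝ) (hbc : b ≤ c)
    (hd : ∀ t ∈ Set.Ioo b c, HasDerivAt h 0 t) : h c = h b := by
  have hdiff : ∀ x ∈ interior (Set.Icc b c), DifferentiableAt ℝ h x := by
    intro x hx; rw [interior_Icc] at hx; exact (hd x hx).differentiableAt
  have h1 : MonotoneOn h (Set.Icc b c) := by
    apply monotoneOn_of_deriv_nonneg (convex_Icc b c) hc.continuousOn
      (fun x hx => (hdiff x hx).differentiableWithinAt)
    intro x hx
    rw [interior_Icc] at hx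
    rw [(hd x hx).deriv]
  have h2 : AntitoneOn h (Set.Icc b c) := by
    apply antitoneOn_of_deriv_nonpos (convex_Icc b c) hc.continuousOn
      (fun x hx => (hdiff x hx).differentiableWithinAt)
    intro x hx
    rw [interior_Icc] at hx
    rw [(hd x hx).deriv]
  exact le_antisymm (h2 ⟨le_refl b, hbc⟩ ⟨hbc, le_refl c⟩ hbc)
    (h1 ⟨le_refl b, hbc⟩ ⟨hbc, le_refl c⟩ hbc)

lemma piecewise_const (M : ℕ) (a : Fin (M + 2) → ℝ) (hmono : Monotone a)
    (h : ℝ → ℝ) (hc : Continuous h)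
    (hd : ∀ i : Fin (M + 1), ∀ t ∈ Set.Ioo (a i.castSucc) (a i.succ), HasDerivAt h 0 t) :
    ∀ i : Fin (M + 2), ∀ t ∈ Set.Icc (a 0) (a i), h t = h (a 0) := by
  intro i
  induction i using Fin.induction with
  | zero => intro t ht; have := le_antisymm ht.2 ht.1; rw [this]
  | succ i ih =>
    intro t ht
    rcases le_or_gt t (a i.castSucc) with hle | hgt
    · exact ih t ⟨ht.1, hle⟩
    · have h1 : h t = h (a i.castSucc) := by
        apply const_of_deriv_zero_Ioo h hc _ _ hgt.le
        intro u hu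
        exact hd i u ⟨hu.1, lt_of_lt_of_le hu.2 ht.2⟩
      rw [h1]
      exact ih (a i.castSucc) ⟨hmono (Fin.zero_le _), le_refl _⟩

/-- Theorem 5 of the paper, second conclusion: if the original trajectory is
collision-free (positions in `F`) on `[0, t_c)` and the velocities are scaled
by `s = α·t_c/Δ` with `0 < α < 1`, then the scaled trajectory is
collision-free on the whole horizon `[0, Δ]`. -/
theorem unicycle_scaled_trajectory_collision_free
    (N : ℕ) (τ : Fin (N + 2) → ℝ) (hτ0 : τ 0 = 0) (hτmono : StrictMono τ)
    (v ω : Fin (N + 1) → ℝ)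
    (x₀ : ℝ × ℝ × ℝ)
    (x₁ x₂ ψ : ℝ → ℝ)
    (hx₁c : Continuous x₁) (hx₂c : Continuous x₂) (hψc : Continuous ψ)
    (hinit : (x₁ 0, x₂ 0, ψ 0) = x₀)
    (hode : ∀ i : Fin (N + 1), ∀ t ∈ Set.Ioo (τ i.castSucc) (τ i.succ),
        HasDerivAt x₁ (v i * Real.cos (ψ t)) t ∧
        HasDerivAt x₂ (v i * Real.sin (ψ t)) t ∧
        HasDerivAt ψ (ω i) t)
    (Δ t_c α s : ℝ) (hΔ : 0 < Δ)
    (ht_c : t_c ∈ Set.Ioc (0 : ℝ) (τ (Fin.last (N + 1))))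
    (hα : 0 < α) (hα1 : α < 1) (hsval : s = α * t_c / Δ)
    (F : Set (ℝ × ℝ))
    (hfree : ∀ t ∈ Set.Ico (0 : ℝ) t_c, (x₁ t, x₂ t) ∈ F)
    (xs₁ xs₂ ψs : ℝ → ℝ)
    (hxs₁c : Continuous xs₁) (hxs₂c : Continuous xs₂) (hψsc : Continuous ψs)
    (hsinit : (xs₁ 0, xs₂ 0, ψs 0) = x₀)
    (hsode : ∀ i : Fin (N + 1), ∀ t ∈ Set.Ioo (τ i.castSucc / s) (τ i.succ / s),
        HasDerivAt xs₁ (s * v i * Real.cos (ψs t)) t ∧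
        HasDerivAt xs₂ (s * v i * Real.sin (ψs t)) t ∧
        HasDerivAt ψs (s * ω i) t) :
    ∀ t ∈ Set.Icc (0 : ℝ) Δ, (xs₁ t, xs₂ t) ∈ F := by
  have hs : 0 < s := by
    rw [hsval]; exact div_pos (mul_pos hα ht_c.1) hΔ
  have hinit' : x₁ 0 = xs₁ 0 ∧ x₂ 0 = xs₂ 0 ∧ ψ 0 = ψs 0 := by
    rw [← hsinit] at hinit
    exact ⟨congrArg Prod.fst hinit, congrArg (fun p => p.2.1) hinit,
      congrArg (fun p => p.2.2) hinit⟩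
  set a : Fin (N + 2) → ℝ := fun i => τ i / s with ha
  have ha0 : a 0 = 0 := by simp [ha, hτ0]
  have hamono : Monotone a := fun i j hij =>
    (div_le_div_iff_of_pos_right hs).mpr (hτmono.monotone hij)
  -- translate interval membership
  have hmem : ∀ (i : Fin (N + 1)) (t : ℝ), t ∈ Set.Ioo (a i.castSucc) (a i.succ) →
      s * t ∈ Set.Ioo (τ i.castSucc) (τ i.succ) := by
    intro i t ht
    constructor
    · rw [mul_comm]; exact (div_lt_iff₀ hs).mp ht.1
    · rw [mul_comm]; exact (lt_div_iff₀ hs).mp ht.2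
  have hIoo_sub : ∀ (i : Fin (N + 1)),
      Set.Ioo (a i.castSucc) (a i.succ) ⊆ Set.Icc (a 0) (a (Fin.last (N + 1))) := by
    intro i u hu
    exact ⟨le_trans (hamono (Fin.zero_le _)) hu.1.le,
      le_trans hu.2.le (hamono (Fin.le_last _))⟩
  have hin : ∀ t : ℝ, HasDerivAt (fun u => s * u) s t := by
    intro t; simpa using (hasDerivAt_id t).const_mul s
  -- ψs agrees with ψ ∘ (s·)
  have hψeq : ∀ t ∈ Set.Icc (a 0) (a (Fin.last (N + 1))), ψs t = ψ (s * t) := by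
    have key := piecewise_const N a hamono (fun u => ψs u - ψ (s * u))
      (hψsc.sub (hψc.comp (continuous_const.mul continuous_id)))
      (by
        intro i t ht
        have hcomp : HasDerivAt (fun u => ψ (s * u)) (ω i * s) t :=
          (hode i (s * t) (hmem i t ht)).2.2.comp t (hin t)
        have hsub := ((hsode i t ht).2.2).sub hcomp
        have e : s * ω i - ω i * s = 0 := by ring
        rwa [e] at hsub)
      (Fin.last (N + 1))
    intro t ht
    have := key t ht
    rw [ha0] at this
    simp only [mul_zero] at this
    rw [← hinit'.2.2] at this
    linarith [this]
  -- xs₁ agrees with x₁ ∘ (s·)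
  have hx₁eq : ∀ t ∈ Set.Icc (a 0) (a (Fin.last (N + 1))), xs₁ t = x₁ (s * t) := by
    have key := piecewise_const N a hamono (fun u => xs₁ u - x₁ (s * u))
      (hxs₁c.sub (hx₁c.comp (continuous_const.mul continuous_id)))
      (by
        intro i t ht
        have hcomp : HasDerivAt (fun u => x₁ (s * u)) (v i * Real.cos (ψ (s * t)) * s) t :=
          (hode i (s * t) (hmem i t ht)).1.comp t (hin t)
        have hsub := ((hsode i t ht).1).sub hcomp
        have e : s * v i * Real.cos (ψs t) - v i * Real.cos (ψ (s * t)) * s = 0 := by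
          rw [hψeq t (hIoo_sub i ht)]; ring
        rwa [e] at hsub)
      (Fin.last (N + 1))
    intro t ht
    have := key t ht
    rw [ha0] at this
    simp only [mul_zero] at this
    rw [← hinit'.1] at this
    linarith [this]
  have hx₂eq : ∀ t ∈ Set.Icc (a 0) (a (Fin.last (N + 1))), xs₂ t = x₂ (s * t) := by
    have key := piecewise_const N a hamono (fun u => xs₂ u - x₂ (s * u))
      (hxs₂c.sub (hx₂c.comp (continuous_const.mul continuous_id)))
      (by
        intro i t ht
        have hcomp : HasDerivAt (fun u => x₂ (s * u)) (v i * Real.sin (ψ (s * t)) * s) t :=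
          (hode i (s * t) (hmem i t ht)).2.1.comp t (hin t)
        have hsub := ((hsode i t ht).2.1).sub hcomp
        have e : s * v i * Real.sin (ψs t) - v i * Real.sin (ψ (s * t)) * s = 0 := by
          rw [hψeq t (hIoo_sub i ht)]; ring
        rwa [e] at hsub)
      (Fin.last (N + 1))
    intro t ht
    have := key t ht
    rw [ha0] at this
    simp only [mul_zero] at this
    rw [← hinit'.2.1] at this
    linarith [this]
  -- conclude
  intro t ht
  have hsΔ : s * Δ = α * t_c := by rw [hsval]; field_simp
  have hΔle : Δ ≤ a (Fin.last (N + 1)) := by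
    rw [ha]
    rw [le_div_iff₀ hs]
    have h1 : α * t_c < t_c := by nlinarith [ht_c.1]
    nlinarith [ht_c.2]
  have htIcc : t ∈ Set.Icc (a 0) (a (Fin.last (N + 1))) :=
    ⟨ha0 ▸ ht.1, le_trans ht.2 hΔle⟩
  rw [hx₁eq t htIcc, hx₂eq t htIcc]
  apply hfree
  constructor
  · exact mul_nonneg hs.le ht.1
  · have h1 : s * t ≤ s * Δ := mul_le_mul_of_nonneg_left ht.2 hs.le
    have h2 : α * t_c < t_c := by nlinarith [ht_c.1]
    linarith [hsΔ ▸ h1]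
end
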